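/- For any two density matrices ρ₁, ρ₂, the fidelity F(ρ₁,ρ₂) = (tr|√ρ₁·√ρ₂|)² satisfies F(ρ₁,ρ₂) ≤ G(ρ₁,ρ₂), where G is the superfidelity. -/

import Mathlib

set_option linter.unusedSectionVars false

open Matrix Kronecker ComplexOrder

/-- The positive semidefinite square root, as defined in Mathlib of December 2024 (since removed). -/
noncomputable def Matrix.PosSemidef.sqrt {n 𝕜 : Type*} [Fintype n] [RCLike 𝕜] [DecidableEq n]
    {A : Matrix n n 𝕜} (hA : A.PosSemidef) : Matrix n n 𝕜 :=
  hA.1.eigenvectorUnitary.1 * diagonal ((↑) ∘ (√·) ∘ hA.1.eigenvalues) *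
    (star hA.1.eigenvectorUnitary : Matrix n n 𝕜)

open scoped MatrixOrder in
theorem Matrix.PosSemidef.sqrt_eq_cfc {n : Type*} [Fintype n] [DecidableEq n]
    {A : Matrix n n ℂ} (hA : A.PosSemidef) : hA.sqrt = CFC.sqrt A := by
  have hA0 : 0 ≤ A := Matrix.nonneg_iff_posSemidef.mpr hA
  rw [CFC.sqrt_eq_cfc, cfc_nnreal_eq_real _ A hA0, hA.1.cfc_eq]
  simp only [IsHermitian.cfc, Matrix.PosSemidef.sqrt, Unitary.conjStarAlgAut_apply]
  congr 3
  funext i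
  simp only [Function.comp_apply, Real.coe_sqrt, Real.coe_toNNReal', max_eq_left (hA.eigenvalues_nonneg i)]

open scoped MatrixOrder in
theorem Matrix.PosSemidef.posSemidef_sqrt {n : Type*} [Fintype n] [DecidableEq n]
    {A : Matrix n n ℂ} (hA : A.PosSemidef) : hA.sqrt.PosSemidef := by
  rw [hA.sqrt_eq_cfc]
  exact Matrix.nonneg_iff_posSemidef.mp (CFC.sqrt_nonneg A)

open scoped MatrixOrder in
theorem Matrix.PosSemidef.sqrt_mul_self {n : Type*} [Fintype n] [DecidableEq n]
    {A : Matrix n n ℂ} (hA : A.PosSemidef) : hA.sqrt * hA.sqrt = A := by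
  rw [hA.sqrt_eq_cfc]
  exact CFC.sqrt_mul_sqrt_self A (Matrix.nonneg_iff_posSemidef.mpr hA)

open scoped MatrixOrder in
theorem Matrix.PosSemidef.eq_of_sq_eq_sq {n : Type*} [Fintype n] [DecidableEq n]
    {A B : Matrix n n ℂ} (hA : A.PosSemidef) (hB : B.PosSemidef) (h : A ^ 2 = B ^ 2) : A = B :=
  (CFC.mul_self_eq_mul_self_iff A B (Matrix.nonneg_iff_posSemidef.mpr hA)
    (Matrix.nonneg_iff_posSemidef.mpr hB)).mp (by rwa [← sq, ← sq])

variable {n : Type*} [Fintype n] [DecidableEq n]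

/-- The swap (flip) matrix on `n × n`. -/
def swapM (n : Type*) [DecidableEq n] : Matrix (n × n) (n × n) ℂ :=
  Matrix.of fun p q => if p.1 = q.2 ∧ p.2 = q.1 then 1 else 0

lemma swapM_mul_kron (A B : Matrix n n ℂ) :
    swapM n * (A ⊗ₖ B) = (B ⊗ₖ A) * swapM n := by
  ext ⟨i, j⟩ ⟨k, l⟩
  simp only [mul_apply, swapM, Matrix.of_apply, kroneckerMap_apply, Fintype.sum_prod_type,
    ite_mul, one_mul, zero_mul, mul_ite, mul_one, mul_zero]
  simp [ite_and, Finset.sum_ite_eq, Finset.sum_ite_eq', mul_comm]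

lemma swapM_mul_swapM : swapM n * swapM n = 1 := by
  ext ⟨i, j⟩ ⟨k, l⟩
  simp only [mul_apply, swapM, Matrix.of_apply, Fintype.sum_prod_type, ite_mul, one_mul, zero_mul,
    one_apply]
  simp [ite_and, Finset.sum_ite_eq, Finset.sum_ite_eq', Prod.ext_iff]
  by_cases h1 : i = k <;> by_cases h2 : j = l <;> simp [h1, h2]

lemma swapM_conjTranspose : (swapM n)ᴴ = swapM n := by
  ext ⟨i, j⟩ ⟨k, l⟩
  by_cases h1 : i = l <;> by_cases h2 : j = k <;>
    simp [swapM, conjTranspose_apply, h1, h2] <;> simp_all [eq_comm]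

lemma trace_kron_mul_swapM (A B : Matrix n n ℂ) :
    trace ((A ⊗ₖ B) * swapM n) = trace (A * B) := by
  simp only [trace, diag, mul_apply, swapM, Matrix.of_apply, kroneckerMap_apply,
    Fintype.sum_prod_type, mul_ite, mul_one, mul_zero, ite_and, Finset.sum_ite_eq,
    Finset.sum_ite_eq', Finset.mem_univ, if_true]
  simp [Finset.sum_ite_eq, Finset.sum_ite_eq']

lemma kron_conjTranspose (A B : Matrix n n ℂ) : (A ⊗ₖ B)ᴴ = Aᴴ ⊗ₖ Bᴴ := by
  ext ⟨i, j⟩ ⟨k, l⟩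
  simp [conjTranspose_apply, kroneckerMap_apply, mul_comm]

noncomputable def QM (n : Type*) [DecidableEq n] : Matrix (n × n) (n × n) ℂ :=
  (2 : ℂ)⁻¹ • (1 - swapM n)

lemma QM_mul_QM : QM n * QM n = QM n := by
  simp only [QM, smul_mul_smul_comm, sub_mul, mul_sub, one_mul, mul_one, swapM_mul_swapM]
  rw [show (2:ℂ)⁻¹ * 2⁻¹ = 2⁻¹ * 2⁻¹ from rfl]
  rw [show (1 - swapM n - (swapM n - 1) : Matrix (n×n) (n×n) ℂ) = (2:ℂ) • (1 - swapM n) by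
    rw [two_smul]; abel]
  rw [smul_smul]
  norm_num

lemma QM_conjTranspose : (QM n)ᴴ = QM n := by
  simp [QM, conjTranspose_smul, conjTranspose_sub, swapM_conjTranspose, Complex.star_def]

lemma QM_comm_kron (A : Matrix n n ℂ) : QM n * (A ⊗ₖ A) = (A ⊗ₖ A) * QM n := by
  simp only [QM, smul_mul_assoc, mul_smul_comm, sub_mul, mul_sub, one_mul, mul_one,
    swapM_mul_kron]

lemma trace_kron_mul_QM (A B : Matrix n n ℂ) :
    trace ((A ⊗ₖ B) * QM n) = (2:ℂ)⁻¹ * (trace A * trace B - trace (A * B)) := by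
  simp only [QM, mul_smul_comm, trace_smul, mul_sub, mul_one, trace_sub,
    trace_kron_mul_swapM, trace_kronecker, smul_eq_mul]

/-- Cauchy–Schwarz for the Hilbert–Schmidt inner product. -/
lemma trace_CS {m : Type*} [Fintype m] (X Y : Matrix m m ℂ) :
    (trace (Xᴴ * Y)).re ≤
      Real.sqrt (trace (Xᴴ * X)).re * Real.sqrt (trace (Yᴴ * Y)).re := by
  classical
  let x : EuclideanSpace ℂ (m × m) := WithLp.toLp 2 (fun p : m × m => X p.1 p.2)
  let y : EuclideanSpace ℂ (m × m) := WithLp.toLp 2 (fun p : m × m => Y p.1 p.2)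
  have htr : ∀ Z W : Matrix m m ℂ, trace (Zᴴ * W) =
      ∑ p : m × m, (starRingEnd ℂ) (Z p.1 p.2) * W p.1 p.2 := by
    intro Z W
    simp [trace, diag, mul_apply, conjTranspose_apply, Fintype.sum_prod_type]
    rw [Finset.sum_comm]
  have hinner : inner ℂ x y = trace (Xᴴ * Y) := by
    rw [htr]
    simp [x, y, PiLp.inner_apply, RCLike.inner_apply]
    exact Finset.sum_congr rfl fun _ _ => mul_comm _ _
  have hnx : ‖x‖ = Real.sqrt (trace (Xᴴ * X)).re := by
    rw [EuclideanSpace.norm_eq]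
    congr 1
    rw [htr]
    rw [Complex.re_sum]
    simp [x, Complex.sq_norm, Complex.normSq_apply, Complex.mul_re]
  have hny : ‖y‖ = Real.sqrt (trace (Yᴴ * Y)).re := by
    rw [EuclideanSpace.norm_eq]
    congr 1
    rw [htr]
    rw [Complex.re_sum]
    simp [y, Complex.sq_norm, Complex.normSq_apply, Complex.mul_re]
  calc (trace (Xᴴ * Y)).re = RCLike.re (inner ℂ x y : ℂ) := by rw [hinner]; rfl
    _ ≤ ‖x‖ * ‖y‖ := re_inner_le_norm x y
    _ = _ := by rw [hnx, hny]

section polar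

open scoped ComplexOrder

lemma row_eq_zero_of_diag_zero {C : Matrix n n ℂ} {d : n → ℂ}
    (hCC : C * Cᴴ = diagonal d) {i : n} (hi : d i = 0) (k : n) : C i k = 0 := by
  have h0 : ∑ k : n, Complex.normSq (C i k) = 0 := by
    have h := congrArg (fun M : Matrix n n ℂ => (M i i).re) hCC
    simp only [mul_apply, conjTranspose_apply, diagonal_apply_eq, hi, Complex.zero_re] at h
    rw [← h, Complex.re_sum]
    exact Finset.sum_congr rfl fun k _ => by simp [Complex.mul_conj]
  have := (Finset.sum_eq_zero_iff_of_nonneg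
    (fun j _ => Complex.normSq_nonneg (C i j))).mp h0 k (Finset.mem_univ k)
  exact Complex.normSq_eq_zero.mp this

lemma exists_polar {X T : Matrix n n ℂ} (hT : T.PosSemidef) (hTX : T * T = X * Xᴴ) :
    ∃ W : Matrix n n ℂ, W * Wᴴ = 1 ∧ Wᴴ * W = 1 ∧ X = T * W := by
  have hH : (X * Xᴴ).PosSemidef := posSemidef_self_mul_conjTranspose X
  set U : Matrix n n ℂ := hH.1.eigenvectorUnitary.1 with hU
  have hUU : Uᴴ * U = 1 := by
    simpa [star_eq_conjTranspose] using (Unitary.mem_iff.mp hH.1.eigenvectorUnitary.2).1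
  have hUU' : U * Uᴴ = 1 := by
    simpa [star_eq_conjTranspose] using (Unitary.mem_iff.mp hH.1.eigenvectorUnitary.2).2
  set lam := hH.1.eigenvalues with hlam
  have hlam0 : ∀ i, 0 ≤ lam i := hH.eigenvalues_nonneg
  set g : n → ℂ := fun i => (Real.sqrt (lam i) : ℂ) with hg
  set T' : Matrix n n ℂ := U * diagonal g * Uᴴ with hT'def
  have hdiagps : (diagonal g).PosSemidef :=
    .diagonal fun i => Complex.zero_le_real.mpr (Real.sqrt_nonneg _)
  have hT'ps : T'.PosSemidef := by
    simpa using hdiagps.mul_mul_conjTranspose_same U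
  have hDg : diagonal g * diagonal g = diagonal (RCLike.ofReal ∘ lam : n → ℂ) := by
    rw [diagonal_mul_diagonal]
    refine congrArg diagonal (funext fun i => ?_)
    show (Real.sqrt (lam i) : ℂ) * (Real.sqrt (lam i) : ℂ) = RCLike.ofReal (lam i)
    rw [← Complex.ofReal_mul, Real.mul_self_sqrt (hlam0 i)]
    rfl
  have hT'sq : T' * T' = X * Xᴴ := by
    have : T' * T' = U * (diagonal g * (Uᴴ * U) * diagonal g) * Uᴴ := by
      simp only [hT'def, mul_assoc]
    rw [this, hUU, mul_one, hDg]
    have hst := hH.1.spectral_theorem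
    rw [Unitary.conjStarAlgAut_apply, star_eq_conjTranspose] at hst
    exact hst.symm
  have hTT' : T = T' := hT.eq_of_sq_eq_sq hT'ps (by rw [pow_two, pow_two, hTX, hT'sq])
  -- the matrix C = Uᴴ X has orthogonal rows
  set C : Matrix n n ℂ := Uᴴ * X with hC
  have hCC : C * Cᴴ = diagonal (RCLike.ofReal ∘ lam : n → ℂ) := by
    have : C * Cᴴ = Uᴴ * (X * Xᴴ) * U := by
      simp only [hC, conjTranspose_mul, conjTranspose_conjTranspose, mul_assoc]
    rw [this, ← star_eq_conjTranspose]
    have hst := hH.1.spectral_theorem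
    rw [Unitary.conjStarAlgAut_apply, ← hU] at hst
    rw [hst, star_eq_conjTranspose]
    simp only [← mul_assoc, hUU, one_mul]
    rw [mul_assoc, hUU, mul_one]
  -- build the unitary completing the normalized rows of C
  set v : n → EuclideanSpace ℂ n := fun i => WithLp.toLp 2 (fun k => ((g i)⁻¹ * C i k : ℂ)) with hv
  have hvon : Orthonormal ℂ (Set.restrict {i | lam i ≠ 0} v) := by
    rw [orthonormal_iff_ite]
    rintro ⟨i, hi⟩ ⟨j, hj⟩
    have hsum : ∑ k : n, (starRingEnd ℂ) (C i k) * C j k = if j = i then (lam j : ℂ) else 0 := by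
      have := congrArg (fun M : Matrix n n ℂ => M j i) hCC
      simpa [mul_apply, conjTranspose_apply, diagonal_apply, mul_comm] using this
    have hinner : (inner ℂ (v i) (v j) : ℂ) =
        (starRingEnd ℂ) (g i)⁻¹ * (g j)⁻¹ * ∑ k : n, (starRingEnd ℂ) (C i k) * C j k := by
      simp only [hv, PiLp.inner_apply, RCLike.inner_apply, Finset.mul_sum]
      refine Finset.sum_congr rfl fun k _ => by rw [_root_.map_mul]; ring
    show (inner ℂ (v i) (v j) : ℂ) = _
    rw [hinner, hsum]
    have hi' : lam i ≠ 0 := hi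
    have hj' : lam j ≠ 0 := hj
    rcases eq_or_ne i j with rfl | hij
    · rw [if_pos rfl, if_pos (Subtype.ext rfl)]
      have hpos : 0 < lam i := (hlam0 i).lt_of_ne (Ne.symm hi')
      have hgeq : g i = (Real.sqrt (lam i) : ℂ) := rfl
      rw [hgeq, ← Complex.ofReal_inv, Complex.conj_ofReal]
      norm_cast
      have hs : Real.sqrt (lam i) ≠ 0 := Real.sqrt_ne_zero'.mpr hpos
      field_simp
      rw [Real.sq_sqrt (hlam0 i)]
    · rw [if_neg (Ne.symm hij), if_neg (by simp [Subtype.ext_iff, hij])]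
      simp
  obtain ⟨b, hb⟩ := hvon.exists_orthonormalBasis_extension_of_card_eq
    (finrank_euclideanSpace (𝕜 := ℂ) (ι := n))
  set V : Matrix n n ℂ := Matrix.of fun i k => b i k with hV
  have hVV : V * Vᴴ = 1 := by
    ext i j
    have hbij := orthonormal_iff_ite.mp b.orthonormal i j
    have : (V * Vᴴ) i j = (starRingEnd ℂ) (inner ℂ (b i) (b j) : ℂ) := by
      simp [hV, mul_apply, conjTranspose_apply, PiLp.inner_apply, RCLike.inner_apply,
        map_sum, _root_.map_mul, mul_comm]
    rw [this, hbij]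
    simp [one_apply, apply_ite (starRingEnd ℂ), eq_comm]
  have hCV : C = diagonal g * V := by
    ext i k
    rw [diagonal_mul]
    rcases eq_or_ne (lam i) 0 with hi | hi
    · have hgi : g i = 0 := by simp [hg, hi]
      have hCik : C i k = 0 := row_eq_zero_of_diag_zero hCC (by simp [hi]) k
      simp [hgi, hCik]
    · have hgi : g i ≠ 0 := by
        have hpos : 0 < lam i := (hlam0 i).lt_of_ne (Ne.symm hi)
        show (Real.sqrt (lam i) : ℂ) ≠ 0
        exact Complex.ofReal_ne_zero.mpr (Real.sqrt_ne_zero'.mpr hpos)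
      have hbi : b i = v i := hb i hi
      rw [hV]
      show C i k = g i * (b i) k
      rw [hbi]
      show C i k = g i * ((g i)⁻¹ * C i k)
      field_simp
  refine ⟨U * V, ?_, ?_, ?_⟩
  · calc U * V * (U * V)ᴴ = U * (V * Vᴴ) * Uᴴ := by
          simp only [conjTranspose_mul, mul_assoc]
      _ = 1 := by rw [hVV, mul_one, hUU']
  · have hVV' : Vᴴ * V = 1 := mul_eq_one_comm.mp hVV
    calc (U * V)ᴴ * (U * V) = Vᴴ * (Uᴴ * U) * V := by
          simp only [conjTranspose_mul, mul_assoc]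
      _ = 1 := by rw [hUU]; rw [mul_one, hVV']
  · have hXUC : X = U * C := by rw [hC, ← mul_assoc, hUU', one_mul]
    rw [hXUC, hCV, hTT', hT'def]
    calc U * (diagonal g * V) = U * diagonal g * V := by rw [mul_assoc]
      _ = U * diagonal g * (Uᴴ * U) * V := by rw [hUU, mul_one]
      _ = U * diagonal g * Uᴴ * (U * V) := by simp only [mul_assoc]

end polar

lemma trace_ctm {m : Type*} [Fintype m] (X Y : Matrix m m ℂ) :
    trace (Xᴴ * Y) = ∑ p : m × m, (starRingEnd ℂ) (X p.1 p.2) * Y p.1 p.2 := by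
  simp [trace, diag, mul_apply, conjTranspose_apply, Fintype.sum_prod_type]
  rw [Finset.sum_comm]

lemma trace_ctm_self_re_nonneg {m : Type*} [Fintype m] (X : Matrix m m ℂ) :
    0 ≤ (trace (Xᴴ * X)).re := by
  rw [trace_ctm, Complex.re_sum]
  refine Finset.sum_nonneg fun p _ => ?_
  rw [mul_comm, Complex.mul_conj]
  exact_mod_cast Complex.normSq_nonneg _

lemma sandwich {M Nm : Matrix (n × n) (n × n) ℂ}
    (hM : QM n * M = M * QM n) (hN : QM n * Nm = Nm * QM n) :
    (QM n * M * QM n) * (QM n * Nm * QM n) = M * Nm * QM n := by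
  calc QM n * M * QM n * (QM n * Nm * QM n)
      = M * QM n * QM n * (QM n * Nm * QM n) := by rw [hM]
    _ = M * (QM n * (QM n * (QM n * (Nm * QM n)))) := by simp only [mul_assoc]
    _ = M * (QM n * (QM n * (Nm * QM n))) := by rw [← mul_assoc (QM n) (QM n), QM_mul_QM]
    _ = M * (QM n * (Nm * QM n)) := by rw [← mul_assoc (QM n) (QM n), QM_mul_QM]
    _ = M * (QM n * Nm * QM n) := by rw [mul_assoc]
    _ = M * (Nm * QM n * QM n) := by rw [hN]
    _ = M * (Nm * (QM n * QM n)) := by rw [mul_assoc]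
    _ = M * Nm * QM n := by rw [QM_mul_QM, mul_assoc]

lemma herm_trace_im {m : Type*} [Fintype m] {A : Matrix m m ℂ} (hA : A.IsHermitian) :
    (trace A).im = 0 := by
  have h : star (trace A) = trace A := by
    rw [← trace_conjTranspose, hA.eq]
  exact Complex.conj_eq_iff_im.mp h

lemma half_re (z : ℂ) : ((2:ℂ)⁻¹ * z).re = z.re / 2 := by
  have h2 : (2:ℂ)⁻¹ = ((2⁻¹ : ℝ) : ℂ) := by norm_num
  rw [h2, Complex.re_ofReal_mul]
  ring

noncomputable def sG {N : ℕ} (ρ σ : Matrix (Fin N) (Fin N) ℂ) : ℝ :=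
  (trace (ρ * σ)).re +
    Real.sqrt (1 - (trace (ρ * ρ)).re) * Real.sqrt (1 - (trace (σ * σ)).re)

theorem fidelity_le_superfidelity {N : ℕ}
    (ρ₁ ρ₂ : Matrix (Fin N) (Fin N) ℂ)
    (h₁ : ρ₁.PosSemidef) (h₂ : ρ₂.PosSemidef)
    (ht₁ : trace ρ₁ = 1) (ht₂ : trace ρ₂ = 1)
    (hm : (h₁.sqrt * ρ₂ * h₁.sqrt).PosSemidef) :
    ((trace hm.sqrt).re) ^ 2 ≤ sG ρ₁ ρ₂ := by
  classical
  set A := h₁.sqrt with hAdef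
  set Bs := h₂.sqrt with hBsdef
  have hAH : Aᴴ = A := h₁.posSemidef_sqrt.1
  have hAA : A * A = ρ₁ := h₁.sqrt_mul_self
  have hBsH : Bsᴴ = Bs := h₂.posSemidef_sqrt.1
  have hBB : Bs * Bs = ρ₂ := h₂.sqrt_mul_self
  set T := hm.sqrt with hTdef
  have hTps : T.PosSemidef := hm.posSemidef_sqrt
  have hTmul : T * T = A * ρ₂ * A := hm.sqrt_mul_self
  have hTsq : T * T = (A * Bs) * (A * Bs)ᴴ := by
    rw [hTmul, conjTranspose_mul, hAH, hBsH, ← hBB]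
    simp only [mul_assoc]
  obtain ⟨W, hWW, hWW', hXTW⟩ := exists_polar hTps hTsq
  set B := Bs * Wᴴ with hBdef
  have hTAB : T = A * B := by
    have h1 : A * Bs = T * W := hXTW
    have : (A * Bs) * Wᴴ = T := by rw [h1, mul_assoc, hWW, mul_one]
    rw [← this, hBdef, mul_assoc]
  have hBBH : B * Bᴴ = ρ₂ := by
    rw [hBdef, conjTranspose_mul, conjTranspose_conjTranspose, hBsH]
    calc Bs * Wᴴ * (W * Bs) = Bs * (Wᴴ * W) * Bs := by simp only [mul_assoc]
      _ = ρ₂ := by rw [hWW', mul_one, hBB]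
  -- traces
  have htr2 : trace (T * T) = trace (ρ₁ * ρ₂) := by
    rw [hTmul, trace_mul_comm, ← mul_assoc, hAA]
  set AA := A ⊗ₖ A with hAAdef
  set BB := B ⊗ₖ B with hBBdef
  set Xt := QM (Fin N) * AA * QM (Fin N) with hXtdef
  set Yt := QM (Fin N) * BB * QM (Fin N) with hYtdef
  have hQA : QM (Fin N) * AA = AA * QM (Fin N) := QM_comm_kron A
  have hQB : QM (Fin N) * BB = BB * QM (Fin N) := QM_comm_kron B
  have hQBH : QM (Fin N) * (Bᴴ ⊗ₖ Bᴴ) = (Bᴴ ⊗ₖ Bᴴ) * QM (Fin N) := QM_comm_kron Bᴴ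
  have hAAH : AAᴴ = AA := by rw [hAAdef, kron_conjTranspose, hAH]
  have hXtH : Xtᴴ = Xt := by
    rw [hXtdef]
    simp only [conjTranspose_mul, hAAH, QM_conjTranspose, mul_assoc]
  have hkron : T ⊗ₖ T = AA * BB := by rw [hTAB, hAAdef, hBBdef, ← mul_kronecker_mul]
  have hmain : trace ((T ⊗ₖ T) * QM (Fin N)) = trace (Xtᴴ * Yt) := by
    rw [hXtH, hXtdef, hYtdef, sandwich hQA hQB, hkron]
  -- key identity
  have hkey : trace T * trace T = trace (ρ₁ * ρ₂) + 2 * trace ((T ⊗ₖ T) * QM (Fin N)) := by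
    rw [trace_kron_mul_QM, ← htr2]
    ring
  -- norms
  have hXX : trace (Xtᴴ * Xt) = (2:ℂ)⁻¹ * (1 - trace (ρ₁ * ρ₁)) := by
    rw [hXtH, hXtdef, sandwich hQA hQA, hAAdef, ← mul_kronecker_mul, hAA,
      trace_kron_mul_QM, ht₁, one_mul]
  have hYY : trace (Ytᴴ * Yt) = (2:ℂ)⁻¹ * (1 - trace (ρ₂ * ρ₂)) := by
    have hYtH : Ytᴴ = QM (Fin N) * (Bᴴ ⊗ₖ Bᴴ) * QM (Fin N) := by
      rw [hYtdef, hBBdef]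
      simp only [conjTranspose_mul, kron_conjTranspose, QM_conjTranspose, mul_assoc]
    rw [hYtH, hYtdef, hBBdef, sandwich hQBH hQB, ← mul_kronecker_mul,
      trace_kron_mul_QM]
    have h1 : trace (Bᴴ * B) = 1 := by rw [trace_mul_comm, hBBH, ht₂]
    have h2 : trace ((Bᴴ * B) * (Bᴴ * B)) = trace (ρ₂ * ρ₂) := by
      calc trace (Bᴴ * B * (Bᴴ * B)) = trace (Bᴴ * (B * Bᴴ * B)) := by simp only [mul_assoc]
        _ = trace ((B * Bᴴ * B) * Bᴴ) := by rw [trace_mul_comm]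
        _ = trace (ρ₂ * ρ₂) := by rw [← hBBH]; simp only [mul_assoc]
    rw [h1, h2, one_mul]
  -- real parts
  set p : ℝ := (trace (ρ₁ * ρ₁)).re with hp
  set q : ℝ := (trace (ρ₂ * ρ₂)).re with hq
  set r : ℝ := (trace (ρ₁ * ρ₂)).re with hr
  set t : ℝ := (trace T).re with ht
  have him : (trace T).im = 0 := herm_trace_im hTps.1
  have hreal : t ^ 2 = r + 2 * (trace ((T ⊗ₖ T) * QM (Fin N))).re := by
    have := congrArg Complex.re hkey
    rw [Complex.mul_re, him] at this
    simp only [mul_zero, sub_zero, Complex.add_re, Complex.mul_re, Complex.re_ofNat,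
      Complex.im_ofNat, zero_mul, sub_zero] at this
    rw [pow_two, this]
  have haval : (trace (Xtᴴ * Xt)).re = (1 - p) / 2 := by
    rw [hXX, half_re, Complex.sub_re, Complex.one_re]
  have hbval : (trace (Ytᴴ * Yt)).re = (1 - q) / 2 := by
    rw [hYY, half_re, Complex.sub_re, Complex.one_re]
  have hpnn : 0 ≤ 1 - p := by
    have := trace_ctm_self_re_nonneg Xt
    rw [haval] at this; linarith
  have hqnn : 0 ≤ 1 - q := by
    have := trace_ctm_self_re_nonneg Yt
    rw [hbval] at this; linarith
  have hCS : (trace ((T ⊗ₖ T) * QM (Fin N))).re ≤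
      Real.sqrt ((1 - p) / 2) * Real.sqrt ((1 - q) / 2) := by
    rw [hmain, ← haval, ← hbval]
    exact trace_CS Xt Yt
  have hsqrt : 2 * (Real.sqrt ((1 - p) / 2) * Real.sqrt ((1 - q) / 2)) =
      Real.sqrt (1 - p) * Real.sqrt (1 - q) := by
    rw [← Real.sqrt_mul (by positivity : (0:ℝ) ≤ (1 - p)/2), ← Real.sqrt_mul hpnn]
    rw [show (1 - p) / 2 * ((1 - q) / 2) = (1 - p) * (1 - q) * (2⁻¹ : ℝ) ^ 2 by ring]
    rw [Real.sqrt_mul (by positivity : (0:ℝ) ≤ (1 - p) * (1 - q)),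
      Real.sqrt_sq (by norm_num : (0:ℝ) ≤ 2⁻¹)]
    ring
  calc t ^ 2 = r + 2 * (trace ((T ⊗ₖ T) * QM (Fin N))).re := hreal
    _ ≤ r + 2 * (Real.sqrt ((1 - p) / 2) * Real.sqrt ((1 - q) / 2)) := by linarith
    _ = r + Real.sqrt (1 - p) * Real.sqrt (1 - q) := by rw [hsqrt]
    _ = sG ρ₁ ρ₂ := rfl
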